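/- Let T be a tree (connected acyclic simple graph), let S ⊆ T be a subtree, and suppose X is a metric space written as a union X = X_S ∪ ⋃_{v ∈ V'} X_v, where V' indexes the vertices of T outside S, each X_v is compact, each X_v intersects X_S nontrivially, X_S is compact, and the collection {X_v : v ∈ V'} is null (for every ε > 0 only finitely many X_v have diameter ≥ ε). Then X is compact. -/

import Mathlib

/-- A metric space covered by a compact subspace `XS` together with a null family
of compact subspaces `Xv i`, each meeting `XS`, is compact. -/
theorem stmt4 {X : Type*} [MetricSpace X] {ι : Type*}
    (XS : Set X) (Xv : ι → Set X)
    (hS : IsCompact XS) (hv : ∀ i, IsCompact (Xv i))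
    (hmeet : ∀ i, (Xv i ∩ XS).Nonempty)
    (hcover : XS ∪ ⋃ i, Xv i = Set.univ)
    (hnull : ∀ ε > (0 : ℝ), {i | ε ≤ Metric.diam (Xv i)}.Finite) :
    CompactSpace X := by
  rw [compactSpace_iff_seqCompactSpace]
  constructor
  intro u hu
  -- For each n, pick a point y n ∈ XS close to u n.
  have hmem : ∀ n, ∃ y ∈ XS, (y = u n) ∨ ∃ i, u n ∈ Xv i ∧ y ∈ Xv i := by
    intro n
    have h : u n ∈ XS ∪ ⋃ i, Xv i := by rw [hcover]; exact Set.mem_univ _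
    rcases h with h | h
    · exact ⟨u n, h, Or.inl rfl⟩
    · rcases Set.mem_iUnion.mp h with ⟨i, hi⟩
      rcases hmeet i with ⟨y, hy1, hy2⟩
      exact ⟨y, hy2, Or.inr ⟨i, hi, hy1⟩⟩
  choose y hyS hy using hmem
  by_cases hA : ∃ i, {n | u n ∈ Xv i}.Infinite
  · -- infinitely many terms in a single compact piece
    obtain ⟨i, hinf⟩ := hA
    have hmem' : ∀ k, (u ∘ Nat.nth {n | u n ∈ Xv i}) k ∈ Xv i := by
      intro k
      exact Nat.nth_mem_of_infinite hinf k
    obtain ⟨a, ha, φ, hφ, hconv⟩ := (hv i).isSeqCompact hmem'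
    exact ⟨a, Set.mem_univ a, Nat.nth _ ∘ φ, (Nat.nth_strictMono hinf).comp hφ,
      hconv⟩
  · push_neg at hA
    have hA : ∀ i, {n | u n ∈ Xv i}.Finite := fun i => by simpa using hA i
    -- dist (u n) (y n) → 0
    have htend : Filter.Tendsto (fun n => dist (u n) (y n)) Filter.atTop (nhds 0) := by
      rw [← Nat.cofinite_eq_atTop]
      intro s hs
      rw [Metric.mem_nhds_iff] at hs
      obtain ⟨ε, hε, hball⟩ := hs
      have hsub : {n | ¬ dist (u n) (y n) ∈ s} ⊆
          ⋃ i ∈ {i | ε ≤ Metric.diam (Xv i)}, {n | u n ∈ Xv i} := by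
        intro n hn
        simp only [Set.mem_setOf_eq] at hn
        have hlt : ¬ dist (u n) (y n) < ε := by
          intro h
          exact hn (hball (by simpa [Real.dist_eq, abs_of_nonneg dist_nonneg] using h))
        push_neg at hlt
        rcases hy n with h | ⟨i, hi1, hi2⟩
        · rw [h, dist_self] at hlt; linarith
        · refine Set.mem_biUnion ?_ hi1
          exact le_trans hlt (Metric.dist_le_diam_of_mem (hv i).isBounded hi1 hi2)
      have hfin : ({n | ¬ dist (u n) (y n) ∈ s}).Finite :=
        Set.Finite.subset (Set.Finite.biUnion (hnull ε hε) (fun i _ => hA i)) hsub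
      simpa [Filter.mem_cofinite, Set.compl_def] using hfin
    obtain ⟨a, haS, φ, hφ, hconv⟩ := hS.isSeqCompact hyS
    refine ⟨a, Set.mem_univ a, φ, hφ, ?_⟩
    have htend' : Filter.Tendsto (fun k => dist (y (φ k)) (u (φ k))) Filter.atTop (nhds 0) := by
      have := htend.comp hφ.tendsto_atTop
      simpa [Function.comp_def, dist_comm] using this
    exact hconv.congr_dist htend'
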